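/- Suppose θ and λ are infinite cardinals such that 2^θ ≤ λ and there exists a family A ⊆ [λ]^θ of size λ meeting every member of [λ]^θ in a set of size θ (i.e., m(λ,θ) = λ). Then there is a colouring c : λ × 2^λ → θ such that for every B ⊆ 2^λ with |B| = λ⁺ there exists α < λ with c[{α} × B] = θ (c restricted to {α} × B is onto θ). -/

import Mathlib

open Cardinal Set

namespace LadderPaper

/-- `C` is a closed unbounded subset of the ordinal `κ`. -/
def IsClubIn (C : Set Ordinal) (κ : Ordinal) : Prop :=
  C ⊆ Set.Iio κ ∧ (∀ α < κ, ∃ β ∈ C, α ≤ β) ∧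
    ∀ α < κ, 0 < α → (∀ β < α, ∃ γ ∈ C, β < γ ∧ γ < α) → α ∈ C

/-- `S` is a stationary subset of the ordinal `κ`. -/
def IsStationaryIn (S : Set Ordinal) (κ : Ordinal) : Prop :=
  S ⊆ Set.Iio κ ∧ ∀ C, IsClubIn C κ → (S ∩ C).Nonempty

/-- `A` is a ladder system over `S ⊆ κ`: each `A δ` (for `δ ∈ S`) is a cofinal subset of `δ`. -/
def IsLadderOn (κ : Ordinal) (S : Set Ordinal) (A : Ordinal → Set Ordinal) : Prop :=
  IsStationaryIn S κ ∧ ∀ δ ∈ S, A δ ⊆ Set.Iio δ ∧ ∀ β < δ, ∃ α ∈ A δ, β ≤ α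

/-- The order type of a set of ordinals. -/
noncomputable def otp (A : Set Ordinal) : Ordinal := Ordinal.type ((· < ·) : A → A → Prop)

/-- The set of accumulation points of a set of ordinals. -/
def acc (A : Set Ordinal) : Set Ordinal := {α ∈ A | sSup (A ∩ Set.Iio α) = α ∧ 0 < α}

/-- The set of non-accumulation points of a set of ordinals. -/
def nacc (A : Set Ordinal) : Set Ordinal := A \ acc A

/-- Lift a cardinal to the universe where cardinalities of sets of ordinals live. -/
noncomputable abbrev cl (θ : Cardinal.{0}) : Cardinal.{1} := Cardinal.lift.{1} θ

/-- Lift an ordinal to the universe where order types of sets of ordinals live. -/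
noncomputable abbrev ol (ξ : Ordinal.{0}) : Ordinal.{1} := Ordinal.lift.{1} ξ

/-- If `2^θ ≤ lam` and `m(lam,θ) = lam` (witnessed by `A`), then
`onto({lam}, [2^lam]^{≤lam}, θ)` holds. -/
theorem stmt4 (θ lam : Cardinal.{0}) (hθ : ℵ₀ ≤ θ) (hlam : ℵ₀ ≤ lam) (hθlam : θ ≤ lam)
    (hpow : (2 : Cardinal) ^ θ ≤ lam)
    (A : Set (Set Ordinal.{0})) (hAcard : #A = cl lam)
    (hA : ∀ a ∈ A, a ⊆ Set.Iio lam.ord ∧ #a = cl θ)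
    (hmeet : ∀ b ⊆ Set.Iio lam.ord, #b = cl θ → ∃ a ∈ A, #↥(a ∩ b) = cl θ) :
    ∃ c : Ordinal.{0} → Ordinal.{0} → Ordinal.{0},
      (∀ α < lam.ord, ∀ β < ((2 : Cardinal) ^ lam).ord, c α β < θ.ord) ∧
      ∀ B ⊆ Set.Iio ((2 : Cardinal) ^ lam).ord, #B = cl (Order.succ lam) →
        ∃ α < lam.ord, ∀ τ < θ.ord, ∃ β ∈ B, c α β = τ := by
  classical
  have hθpos : (0 : Ordinal) < θ.ord := by
    rw [← Cardinal.ord_zero, Cardinal.ord_lt_ord]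
    exact lt_of_lt_of_le aleph0_pos hθ
  have hliftθ : ℵ₀ ≤ Cardinal.lift.{1} θ := Cardinal.aleph0_le_lift.mpr hθ
  have hliftlam : ℵ₀ ≤ Cardinal.lift.{1} lam := Cardinal.aleph0_le_lift.mpr hlam
  have hIioθ : #(Set.Iio θ.ord) = Cardinal.lift.{1} θ := by
    rw [Ordinal.mk_Iio_ordinal, Cardinal.card_ord]
  have hIiolam : #(Set.Iio lam.ord) = Cardinal.lift.{1} lam := by
    rw [Ordinal.mk_Iio_ordinal, Cardinal.card_ord]
  -- code the ordinals below `(2^lam).ord` by subsets of `Iio lam.ord`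
  obtain ⟨x, hxsub, hxinj⟩ : ∃ x : Ordinal.{0} → Set Ordinal.{0},
      (∀ β, x β ⊆ Set.Iio lam.ord) ∧
      (∀ β β', β < ((2 : Cardinal) ^ lam).ord → β' < ((2 : Cardinal) ^ lam).ord →
        x β = x β' → β = β') := by
    have h1 : #(Set.Iio ((2 : Cardinal) ^ lam).ord) = #(Set (Set.Iio lam.ord)) := by
      rw [Ordinal.mk_Iio_ordinal, Cardinal.card_ord, Cardinal.mk_set, hIiolam,
        Cardinal.lift_two_power]
    obtain ⟨e⟩ := Cardinal.eq.mp h1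
    refine ⟨fun β => if h : β < ((2 : Cardinal) ^ lam).ord then Subtype.val '' (e ⟨β, h⟩) else ∅,
      fun β => ?_, fun β β' hβ hβ' hxx => ?_⟩
    · dsimp only
      split
      · rintro y ⟨z, _, rfl⟩; exact z.2
      · exact fun y h => absurd h (Set.notMem_empty y)
    · simp only [dif_pos hβ, dif_pos hβ'] at hxx
      have h2 : e ⟨β, hβ⟩ = e ⟨β', hβ'⟩ :=
        Set.image_injective.mpr Subtype.val_injective hxx
      exact congrArg Subtype.val (e.injective h2)
  -- enumerations of the members of `A` in order type `θ.ord`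
  obtain ⟨f, hf⟩ : ∃ f : Set Ordinal.{0} → Ordinal.{0} → Ordinal.{0},
      ∀ a, a ∈ A → (∀ i, f a i ∈ a) ∧ ∀ ξ ∈ a, ∃ i, i < θ.ord ∧ f a i = ξ := by
    have hex : ∀ a : Set Ordinal.{0}, ∃ g : Ordinal.{0} → Ordinal.{0},
        a ∈ A → (∀ i, g i ∈ a) ∧ ∀ ξ ∈ a, ∃ i, i < θ.ord ∧ g i = ξ := by
      intro a
      by_cases ha : a ∈ A
      · have h1 : #(Set.Iio θ.ord) = #a := by rw [hIioθ, (hA a ha).2]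
        obtain ⟨e⟩ := Cardinal.eq.mp h1
        refine ⟨fun i => if h : i < θ.ord then (e ⟨i, h⟩ : Ordinal) else (e ⟨0, hθpos⟩ : Ordinal),
          fun _ => ⟨fun i => ?_, fun ξ hξ => ?_⟩⟩
        · dsimp only
          split
          · exact (e _).2
          · exact (e _).2
        · obtain ⟨i, hi⟩ := e.surjective ⟨ξ, hξ⟩
          refine ⟨i.1, i.2, ?_⟩
          dsimp only
          rw [dif_pos (Set.mem_Iio.mp i.2)]
          exact congrArg Subtype.val hi
      · exact ⟨fun _ => 0, fun h => absurd h ha⟩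
    choose g hg using hex
    exact ⟨g, hg⟩
  -- the index set of colourings
  set Gs : Set (Set Ordinal.{0} × Set (Ordinal.{0} × Ordinal.{0})) :=
    {p | p.1 ∈ A ∧ p.2 ⊆ p.1 ×ˢ Set.Iio θ.ord} with hGsdef
  have hAne : A.Nonempty := by
    rw [← Set.nonempty_coe_sort, ← Cardinal.mk_ne_zero_iff, hAcard]
    exact (lt_of_lt_of_le aleph0_pos hliftlam).ne'
  have hGne : Nonempty ↥Gs := by
    obtain ⟨a, ha⟩ := hAne
    exact ⟨⟨(a, ∅), ha, Set.empty_subset _⟩⟩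
  -- recover `S` from its coded version
  have hrecov : ∀ (aa : Set Ordinal.{0}), aa ∈ A → ∀ (S : Set (Ordinal.{0} × Ordinal.{0})),
      S ⊆ aa ×ˢ Set.Iio θ.ord →
      S = {q : Ordinal.{0} × Ordinal.{0} |
        ∃ i : ↥(Set.Iio θ.ord), ∃ t : ↥(Set.Iio θ.ord), f aa i.1 = q.1 ∧ t.1 = q.2 ∧
          (i, t) ∈ {q' : ↥(Set.Iio θ.ord) × ↥(Set.Iio θ.ord) | (f aa q'.1.1, q'.2.1) ∈ S}} := by
    intro aa ha S hS
    ext ⟨ξ, τ⟩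
    constructor
    · intro hmem
      have hp := Set.mem_prod.mp (hS hmem)
      obtain ⟨i, hi, hfi⟩ := (hf aa ha).2 ξ hp.1
      refine ⟨⟨i, hi⟩, ⟨τ, hp.2⟩, hfi, rfl, ?_⟩
      simp only [Set.mem_setOf_eq]
      rw [hfi]
      exact hmem
    · rintro ⟨i, t, h1, h2, h3⟩
      simp only [Set.mem_setOf_eq] at h3
      rw [h1, h2] at h3
      exact h3
  have hGcard : #↥Gs ≤ Cardinal.lift.{1} lam := by
    have hinj : Function.Injective (fun p : ↥Gs =>
        ((⟨p.1.1, p.2.1⟩ : ↥A),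
         {q : ↥(Set.Iio θ.ord) × ↥(Set.Iio θ.ord) | (f p.1.1 q.1.1, q.2.1) ∈ p.1.2})) := by
      rintro ⟨⟨a1, S1⟩, ha1, hS1⟩ ⟨⟨a2, S2⟩, ha2, hS2⟩ h
      dsimp only at h
      injection h with h1 h2
      have h12 : a1 = a2 := congrArg Subtype.val h1
      subst h12
      apply Subtype.ext
      dsimp only
      refine congrArg (Prod.mk a1) ?_
      rw [hrecov a1 ha1 S1 hS1, h2]
      exact (hrecov a1 ha1 S2 hS2).symm
    have hle := Cardinal.mk_le_of_injective hinj
    have h3 : #(Set (↥(Set.Iio θ.ord) × ↥(Set.Iio θ.ord))) ≤ Cardinal.lift.{1} lam := by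
      rw [Cardinal.mk_set, Cardinal.mk_prod, Cardinal.lift_id, hIioθ,
        Cardinal.mul_eq_self hliftθ, ← Cardinal.lift_two_power]
      exact Cardinal.lift_le.mpr hpow
    have h2 : #(↥A × Set (↥(Set.Iio θ.ord) × ↥(Set.Iio θ.ord))) ≤ Cardinal.lift.{1} lam := by
      rw [Cardinal.mk_prod, Cardinal.lift_id, Cardinal.lift_id, hAcard]
      calc cl lam * #(Set (↥(Set.Iio θ.ord) × ↥(Set.Iio θ.ord)))
          ≤ Cardinal.lift.{1} lam * Cardinal.lift.{1} lam := mul_le_mul_right h3 _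
        _ = Cardinal.lift.{1} lam := Cardinal.mul_eq_self hliftlam
    exact hle.trans h2
  -- a surjective listing of `Gs` by the ordinals below `lam.ord`
  have hGle : #↥Gs ≤ #(Set.Iio lam.ord) := by rw [hIiolam]; exact hGcard
  obtain ⟨emb⟩ := (Cardinal.le_def _ _).mp hGle
  haveI := hGne
  set φ : ↥(Set.Iio lam.ord) → ↥Gs := Function.invFun emb with hφdef
  have hφ : Function.Surjective φ := Function.invFun_surjective emb.injective
  refine ⟨fun α β =>
    if hα : α < lam.ord then
      if hu : ∃! τ, τ < θ.ord ∧
          {ξ : Ordinal.{0} | (ξ, τ) ∈ (φ ⟨α, hα⟩).1.2} = x β ∩ (φ ⟨α, hα⟩).1.1 then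
        hu.choose
      else 0
    else 0, ?_, ?_⟩
  · intro α hα β _
    simp only [dif_pos hα]
    split
    · next hu => exact hu.choose_spec.1.1
    · exact hθpos
  · intro B hBsub hBcard
    have hsucc : Cardinal.lift.{1} lam < #↥B := by
      rw [hBcard]
      exact Cardinal.lift_lt.mpr (Order.lt_succ lam)
    -- the splitting lemma
    have key1 : ∀ E : Set Ordinal.{0}, #↥E ≤ Cardinal.lift.{1} θ →
        ∃ p : Ordinal.{0} × Ordinal.{0} × Ordinal.{0},
          p.2.1 ∈ B ∧ p.2.2 ∈ B ∧ x p.2.1 ∩ E = x p.2.2 ∩ E ∧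
          p.1 ∈ x p.2.1 ∧ p.1 ∉ x p.2.2 ∧ p.1 < lam.ord := by
      intro E hE
      have hcard : #(Set ↥E) < #↥B := by
        rw [Cardinal.mk_set]
        calc (2 : Cardinal.{1}) ^ #↥E ≤ 2 ^ Cardinal.lift.{1} θ :=
              Cardinal.power_le_power_left two_ne_zero hE
          _ = Cardinal.lift.{1} ((2 : Cardinal) ^ θ) := (Cardinal.lift_two_power θ).symm
          _ ≤ Cardinal.lift.{1} lam := Cardinal.lift_le.mpr hpow
          _ < #↥B := hsucc
      have hni : ¬ Function.Injective (fun b : ↥B => {e : ↥E | (e : Ordinal) ∈ x b.1}) := by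
        intro hinj
        exact absurd (Cardinal.mk_le_of_injective hinj) (not_le.mpr hcard)
      rw [Function.not_injective_iff] at hni
      obtain ⟨b1, b2, heq, hne⟩ := hni
      have hxE : x b1.1 ∩ E = x b2.1 ∩ E := by
        ext ξ
        constructor
        · rintro ⟨h1, h2⟩
          exact ⟨(Set.ext_iff.mp heq ⟨ξ, h2⟩).mp h1, h2⟩
        · rintro ⟨h1, h2⟩
          exact ⟨(Set.ext_iff.mp heq ⟨ξ, h2⟩).mpr h1, h2⟩
      have hxne : x b1.1 ≠ x b2.1 := by
        intro h
        exact hne (Subtype.ext (hxinj _ _ (hBsub b1.2) (hBsub b2.2) h))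
      have hdiff : ∃ ξ, (ξ ∈ x b1.1 ∧ ξ ∉ x b2.1) ∨ (ξ ∈ x b2.1 ∧ ξ ∉ x b1.1) := by
        by_contra hcon
        push_neg at hcon
        apply hxne
        ext ξ
        have h1 := (hcon ξ).1
        have h2 := (hcon ξ).2
        tauto
      obtain ⟨ξ, hξ⟩ := hdiff
      rcases hξ with ⟨h1, h2⟩ | ⟨h1, h2⟩
      · exact ⟨(ξ, b1.1, b2.1), b1.2, b2.2, hxE, h1, h2, hxsub _ h1⟩
      · exact ⟨(ξ, b2.1, b1.1), b2.2, b1.2, hxE.symm, h1, h2, hxsub _ h1⟩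
    have key1' : ∀ (j : Ordinal.{0}) (IH : ∀ k, k < j → Ordinal.{0} × Ordinal.{0} × Ordinal.{0}),
        j < θ.ord →
        ∃ p : Ordinal.{0} × Ordinal.{0} × Ordinal.{0},
          p.2.1 ∈ B ∧ p.2.2 ∈ B ∧
          x p.2.1 ∩ {y | ∃ k, ∃ hk : k < j, (IH k hk).1 = y} =
            x p.2.2 ∩ {y | ∃ k, ∃ hk : k < j, (IH k hk).1 = y} ∧
          p.1 ∈ x p.2.1 ∧ p.1 ∉ x p.2.2 ∧ p.1 < lam.ord := by
      intro j IH hj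
      apply key1
      have hsub : {y | ∃ k, ∃ hk : k < j, (IH k hk).1 = y} ⊆
          Set.range (fun k : ↥(Set.Iio j) => (IH k.1 k.2).1) := by
        rintro y ⟨k, hk, he⟩
        exact ⟨⟨k, hk⟩, he⟩
      calc #↥{y | ∃ k, ∃ hk : k < j, (IH k hk).1 = y}
          ≤ #↥(Set.range (fun k : ↥(Set.Iio j) => (IH k.1 k.2).1)) :=
            Cardinal.mk_le_mk_of_subset hsub
        _ ≤ #↥(Set.Iio j) := Cardinal.mk_range_le
        _ = Cardinal.lift.{1} j.card := Ordinal.mk_Iio_ordinal j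
        _ ≤ Cardinal.lift.{1} θ := by
            apply Cardinal.lift_le.mpr
            have hcc := Ordinal.card_le_card hj.le
            rwa [Cardinal.card_ord] at hcc
    set step : ∀ _ : Ordinal.{0}, (∀ k, k < _ → Ordinal.{0} × Ordinal.{0} × Ordinal.{0}) →
        Ordinal.{0} × Ordinal.{0} × Ordinal.{0} := fun j IH =>
      if hj : j < θ.ord then (key1' j IH hj).choose else (0, 0, 0) with hstepdef
    set T : Ordinal.{0} → Ordinal.{0} × Ordinal.{0} × Ordinal.{0} :=
      WellFounded.fix Ordinal.lt_wf step with hTdef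
    have hprop : ∀ j, j < θ.ord →
        (T j).2.1 ∈ B ∧ (T j).2.2 ∈ B ∧
        x (T j).2.1 ∩ {y | ∃ k, ∃ hk : k < j, (T k).1 = y} =
          x (T j).2.2 ∩ {y | ∃ k, ∃ hk : k < j, (T k).1 = y} ∧
        (T j).1 ∈ x (T j).2.1 ∧ (T j).1 ∉ x (T j).2.2 ∧ (T j).1 < lam.ord := by
      intro j hj
      have hfix : T j = step j (fun k _ => T k) := by
        rw [hTdef]
        exact WellFounded.fix_eq _ _ _
      have hfix2 : step j (fun k _ => T k) = (key1' j (fun k _ => T k) hj).choose := by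
        rw [hstepdef]
        exact dif_pos hj
      rw [hfix, hfix2]
      exact (key1' j (fun k _ => T k) hj).choose_spec
    have hnotE : ∀ j, j < θ.ord → (T j).1 ∉ {y | ∃ k, ∃ hk : k < j, (T k).1 = y} := by
      intro j hj hmem
      have h := hprop j hj
      have h1 : (T j).1 ∈ x (T j).2.1 ∩ {y | ∃ k, ∃ hk : k < j, (T k).1 = y} :=
        ⟨h.2.2.2.1, hmem⟩
      rw [h.2.2.1] at h1
      exact h.2.2.2.2.1 h1.1
    have hinjT : ∀ j k, j < θ.ord → k < θ.ord → (T j).1 = (T k).1 → j = k := by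
      intro j k hj hk he
      by_contra hne
      rcases Ne.lt_or_gt hne with h | h
      · exact hnotE k hk ⟨j, h, he⟩
      · exact hnotE j hj ⟨k, h, he.symm⟩
    set b : Set Ordinal.{0} := {y | ∃ j, ∃ hj : j < θ.ord, (T j).1 = y} with hbdef
    have hbsub : b ⊆ Set.Iio lam.ord := by
      rintro y ⟨j, hj, rfl⟩
      exact (hprop j hj).2.2.2.2.2
    have hbcard : #↥b = Cardinal.lift.{1} θ := by
      have hre : b = Set.range (fun j : ↥(Set.Iio θ.ord) => (T j.1).1) := by
        ext y
        constructor
        · rintro ⟨j, hj, rfl⟩; exact ⟨⟨j, hj⟩, rfl⟩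
        · rintro ⟨j, rfl⟩; exact ⟨j.1, j.2, rfl⟩
      have hinj2 : Function.Injective (fun j : ↥(Set.Iio θ.ord) => (T j.1).1) :=
        fun j k h => Subtype.ext (hinjT _ _ j.2 k.2 h)
      rw [hre]
      exact (Cardinal.mk_range_eq _ hinj2).trans hIioθ
    obtain ⟨a, haA, habc⟩ := hmeet b hbsub hbcard
    set Ta : Set (Set Ordinal.{0}) := {s | ∃ β ∈ B, x β ∩ a = s} with hTadef
    have hidx : ∀ y : ↥(a ∩ b), ∃ j, j < θ.ord ∧ (T j).1 = y.1 := by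
      rintro ⟨y, hy⟩
      obtain ⟨j, hj, he⟩ := hy.2
      exact ⟨j, hj, he⟩
    choose idx hidxlt hidxeq using hidx
    have hmain : ∀ j k, j < θ.ord → k < θ.ord → j < k → (T j).1 ∈ a →
        x (T j).2.1 ∩ a = x (T k).2.1 ∩ a → x (T j).2.2 ∩ a = x (T k).2.2 ∩ a → False := by
      intro j k hj hk hjk hja h1 h2
      have hm1 : (T j).1 ∈ x (T k).2.1 ∩ a := by
        rw [← h1]; exact ⟨(hprop j hj).2.2.2.1, hja⟩
      have hm2 : (T j).1 ∈ x (T k).2.1 ∩ {y | ∃ k', ∃ hk' : k' < k, (T k').1 = y} :=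
        ⟨hm1.1, ⟨j, hjk, rfl⟩⟩
      rw [(hprop k hk).2.2.1] at hm2
      have hm3 : (T j).1 ∈ x (T j).2.2 ∩ a := by
        rw [h2]; exact ⟨hm2.1, hja⟩
      exact (hprop j hj).2.2.2.2.1 hm3.1
    have hψinj : Function.Injective (fun y : ↥(a ∩ b) =>
        ((⟨x (T (idx y)).2.1 ∩ a, (T (idx y)).2.1, (hprop _ (hidxlt y)).1, rfl⟩ : ↥Ta),
         (⟨x (T (idx y)).2.2 ∩ a, (T (idx y)).2.2, (hprop _ (hidxlt y)).2.1, rfl⟩ : ↥Ta))) := by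
      intro y z h
      simp only [Prod.mk.injEq, Subtype.mk.injEq] at h
      have hya : (T (idx y)).1 ∈ a := by rw [hidxeq y]; exact y.2.1
      have hza : (T (idx z)).1 ∈ a := by rw [hidxeq z]; exact z.2.1
      have hjk : idx y = idx z := by
        by_contra hne
        rcases Ne.lt_or_gt hne with hlt | hlt
        · exact hmain _ _ (hidxlt y) (hidxlt z) hlt hya h.1 h.2
        · exact hmain _ _ (hidxlt z) (hidxlt y) hlt hza h.1.symm h.2.symm
      apply Subtype.ext
      rw [← hidxeq y, ← hidxeq z, hjk]
    have hTacard : Cardinal.lift.{1} θ ≤ #↥Ta := by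
      have hle := Cardinal.mk_le_of_injective hψinj
      rw [habc, Cardinal.mk_prod, Cardinal.lift_id] at hle
      rcases lt_or_ge (#↥Ta) ℵ₀ with hfin | hinf
      · exact absurd (hle.trans_lt (Cardinal.mul_lt_aleph0 hfin hfin)) (not_lt.mpr hliftθ)
      · rwa [Cardinal.mul_eq_self hinf] at hle
    have hle2 : #(Set.Iio θ.ord) ≤ #↥Ta := by rw [hIioθ]; exact hTacard
    obtain ⟨ι⟩ := (Cardinal.le_def _ _).mp hle2
    set S : Set (Ordinal.{0} × Ordinal.{0}) :=
      {q | ∃ h : q.2 < θ.ord, q.1 ∈ ((ι ⟨q.2, h⟩ : ↥Ta) : Set Ordinal.{0})} with hSdef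
    have hSsub : S ⊆ a ×ˢ Set.Iio θ.ord := by
      rintro ⟨ξ, τ⟩ ⟨h, hmem⟩
      obtain ⟨β, hβ, hβe⟩ := (ι ⟨τ, h⟩).2
      refine Set.mem_prod.mpr ⟨?_, h⟩
      rw [← hβe] at hmem
      exact hmem.2
    obtain ⟨αhat, hαhat⟩ := hφ ⟨(a, S), haA, hSsub⟩
    refine ⟨αhat.1, αhat.2, ?_⟩
    intro τ hτ
    obtain ⟨β, hβB, hβe⟩ := (ι ⟨τ, hτ⟩).2
    refine ⟨β, hβB, ?_⟩
    have hα : αhat.1 < lam.ord := αhat.2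
    have hφα : φ ⟨αhat.1, hα⟩ = ⟨(a, S), haA, hSsub⟩ := hαhat
    have hgS : ∀ τ' (h : τ' < θ.ord),
        {ξ : Ordinal.{0} | (ξ, τ') ∈ S} = ((ι ⟨τ', h⟩ : ↥Ta) : Set Ordinal.{0}) := by
      intro τ' h
      ext ξ
      simp only [hSdef, Set.mem_setOf_eq]
      exact ⟨fun ⟨h', hm⟩ => hm, fun hm => ⟨h, hm⟩⟩
    have hu : ∃! τ', τ' < θ.ord ∧ {ξ : Ordinal.{0} | (ξ, τ') ∈ S} = x β ∩ a := by
      refine ⟨τ, ⟨hτ, by rw [hgS τ hτ, hβe]⟩, ?_⟩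
      rintro τ' ⟨h', he'⟩
      rw [hgS τ' h'] at he'
      exact congrArg Subtype.val (ι.injective (Subtype.ext (he'.trans hβe)))
    simp only [dif_pos hα, hφα]
    rw [dif_pos hu]
    exact ((hu.choose_spec).2 τ ⟨hτ, by rw [hgS τ hτ, hβe]⟩).symm

end LadderPaper
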